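/- Let n ≥ 1. Every complex linear subspace W of sl(2n,ℂ) such that sp(2n,ℂ) ⊆ W and [X,Y] ∈ W for all X ∈ sp(2n,ℂ) and Y ∈ W is equal to sp(2n,ℂ) or to sl(2n,ℂ). (For n ≥ 2 this says that the quotient sl(2n,ℂ)/sp(2n,ℂ), with the adjoint action of sp(2n,ℂ), is an irreducible sp(2n,ℂ)-module.) -/

import Mathlib

open Matrix

/-- The standard symplectic matrix `J₀ = [[0, I], [−I, 0]]` (in `n × n` block form)
as a complex `2n × 2n` matrix. -/
def stdJ (n : ℕ) : Matrix (Fin n ⊕ Fin n) (Fin n ⊕ Fin n) ℂ :=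
  Matrix.fromBlocks 0 1 (-1) 0

namespace SlSp

variable {n : ℕ}

/-- elementary n×n matrix -/
def e (p q : Fin n) : Matrix (Fin n) (Fin n) ℂ := Matrix.single p q 1

lemma e_mul_e (p q r s : Fin n) : e p q * e r s = if q = r then e p s else 0 := by
  unfold e
  by_cases h : q = r
  · subst h; simp
  · simp [h]

lemma e_mul_mat_mul_e (p q : Fin n) (M : Matrix (Fin n) (Fin n) ℂ) :
    e p p * M * e q q = M p q • e p q := by
  ext i j
  simp [e, Matrix.mul_apply, Matrix.single, Finset.sum_ite_eq,
    Finset.mul_sum, ite_and]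
  by_cases hi : p = i <;> by_cases hj : q = j <;> simp [hi, hj, mul_comm]

lemma mul_diag (A : Matrix (Fin n) (Fin n) ℂ) (hA : ∀ i j, i ≠ j → A i j = 0)
    (p q : Fin n) : e p q * A = A q q • e p q := by
  ext i j
  by_cases hj : q = j
  · subst hj
    by_cases hi : p = i <;>
      simp [e, Matrix.mul_apply, Matrix.single, ite_and, Finset.sum_ite_eq,
        hi, mul_comm]
  · by_cases hi : p = i <;>
      simp [e, Matrix.mul_apply, Matrix.single, ite_and, Finset.sum_ite_eq,
        hi, hj, hA q j (fun h => hj h)]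

lemma diag_mul (A : Matrix (Fin n) (Fin n) ℂ) (hA : ∀ i j, i ≠ j → A i j = 0)
    (p q : Fin n) : A * e p q = A p p • e p q := by
  ext i j
  by_cases hi : p = i
  · subst hi
    by_cases hj : q = j <;>
      simp [e, Matrix.mul_apply, Matrix.single, ite_and, Finset.sum_ite_eq, hj]
  · by_cases hj : q = j <;>
      simp [e, Matrix.mul_apply, Matrix.single, ite_and, Finset.sum_ite_eq,
        hi, hj, hA i p (fun h => hi h.symm)]

lemma trace_fromBlocks (A B C D : Matrix (Fin n) (Fin n) ℂ) :
    (Matrix.fromBlocks A B C D).trace = A.trace + D.trace := by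
  simp [Matrix.trace, Fintype.sum_sum_type, Matrix.fromBlocks, Matrix.diag]

lemma mem_sp_iff (A B C D : Matrix (Fin n) (Fin n) ℂ) :
    (Matrix.fromBlocks A B C D)ᵀ * stdJ n + stdJ n * Matrix.fromBlocks A B C D = 0
      ↔ Cᵀ = C ∧ D = -Aᵀ ∧ Bᵀ = B := by
  rw [stdJ, Matrix.fromBlocks_transpose, Matrix.fromBlocks_multiply,
    Matrix.fromBlocks_multiply, Matrix.fromBlocks_add, ← Matrix.fromBlocks_zero,
    Matrix.fromBlocks_inj]
  constructor
  · rintro ⟨h1, h2, h3, h4⟩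
    simp only [Matrix.mul_zero, Matrix.mul_one, Matrix.mul_neg, Matrix.zero_mul,
      Matrix.one_mul, Matrix.neg_mul, zero_add, add_zero] at h1 h2 h4
    refine ⟨?_, ?_, ?_⟩
    · exact (neg_add_eq_zero.mp h1)
    · exact eq_neg_of_add_eq_zero_right h2
    · exact (add_neg_eq_zero.mp h4)
  · rintro ⟨h1, h2, h3⟩
    subst h2
    refine ⟨?_, ?_, ?_, ?_⟩ <;> simp [h1, h3]


lemma e_transpose (p q : Fin n) : (e p q)ᵀ = e q p := by
  ext i j
  simp [e, Matrix.single, Matrix.transpose_apply, and_comm]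

lemma e_mat_e (p q r s : Fin n) (M : Matrix (Fin n) (Fin n) ℂ) :
    e p q * M * e r s = M q r • e p s := by
  ext i j
  by_cases hi : p = i
  · by_cases hj : s = j <;>
      simp [e, Matrix.mul_apply, Matrix.single, ite_and, Finset.sum_ite_eq,
        Finset.mul_sum, hi, hj, mul_comm]
  · simp [e, Matrix.mul_apply, Matrix.single, ite_and, Finset.sum_ite_eq,
      Finset.mul_sum, hi]

lemma e_mat_e' (p q r s : Fin n) (M : Matrix (Fin n) (Fin n) ℂ) :
    e p q * (M * e r s) = M q r • e p s := by
  rw [← Matrix.mul_assoc, e_mat_e]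

/-- generators of `sp`. -/
def Ua (p : Fin n) : Matrix (Fin n ⊕ Fin n) (Fin n ⊕ Fin n) ℂ :=
  Matrix.fromBlocks 0 (e p p) 0 0
def La (p : Fin n) : Matrix (Fin n ⊕ Fin n) (Fin n ⊕ Fin n) ℂ :=
  Matrix.fromBlocks 0 0 (e p p) 0
def Sg (p q : Fin n) : Matrix (Fin n ⊕ Fin n) (Fin n ⊕ Fin n) ℂ :=
  Matrix.fromBlocks (e p q) 0 0 (-(e q p))

/-- generators of the complement `m₀`. -/
def ag (p q : Fin n) : Matrix (Fin n ⊕ Fin n) (Fin n ⊕ Fin n) ℂ :=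
  Matrix.fromBlocks (e p q) 0 0 (e q p)
def bg (p q : Fin n) : Matrix (Fin n ⊕ Fin n) (Fin n ⊕ Fin n) ℂ :=
  Matrix.fromBlocks 0 (e p q - e q p) 0 0
def cg (p q : Fin n) : Matrix (Fin n ⊕ Fin n) (Fin n ⊕ Fin n) ℂ :=
  Matrix.fromBlocks 0 0 (e p q - e q p) 0
def dg (p q : Fin n) : Matrix (Fin n ⊕ Fin n) (Fin n ⊕ Fin n) ℂ :=
  Matrix.fromBlocks (e p p - e q q) 0 0 (e p p - e q q)

lemma Ua_mem_sp (p : Fin n) : (Ua p)ᵀ * stdJ n + stdJ n * Ua p = 0 := by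
  rw [Ua, mem_sp_iff]
  simp [e_transpose]

lemma La_mem_sp (p : Fin n) : (La p)ᵀ * stdJ n + stdJ n * La p = 0 := by
  rw [La, mem_sp_iff]
  simp [e_transpose]

lemma Sg_mem_sp (p q : Fin n) : (Sg p q)ᵀ * stdJ n + stdJ n * Sg p q = 0 := by
  rw [Sg, mem_sp_iff]
  simp [e_transpose]

lemma fromBlocks_sub (A B C D A' B' C' D' : Matrix (Fin n) (Fin n) ℂ) :
    Matrix.fromBlocks A B C D - Matrix.fromBlocks A' B' C' D'
      = Matrix.fromBlocks (A - A') (B - B') (C - C') (D - D') := by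
  ext (i | i) (j | j) <;> simp [Matrix.fromBlocks]

lemma e_mul_e_mat (p q r s : Fin n) (M : Matrix (Fin n) (Fin n) ℂ) :
    e p q * (e r s * M) = if q = r then e p s * M else 0 := by
  rw [← Matrix.mul_assoc, e_mul_e]; split <;> simp

lemma br_UL (p q : Fin n) (hpq : p ≠ q) (A B C D : Matrix (Fin n) (Fin n) ℂ) :
    Ua p * (La q * Matrix.fromBlocks A B C D - Matrix.fromBlocks A B C D * La q)
      - (La q * Matrix.fromBlocks A B C D - Matrix.fromBlocks A B C D * La q) * Ua p
      = Matrix.fromBlocks (-(D p q) • e p q) 0 0 (-(A q p) • e q p) := by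
  simp [Ua, La, Matrix.fromBlocks_multiply, fromBlocks_sub, Matrix.mul_sub,
    Matrix.sub_mul, Matrix.mul_assoc, e_mul_e_mat, e_mul_e, e_mat_e', e_mat_e,
    hpq, Ne.symm hpq]

lemma br_LL (p q : Fin n) (hpq : p ≠ q) (A B C D : Matrix (Fin n) (Fin n) ℂ) :
    La p * (La q * Matrix.fromBlocks A B C D - Matrix.fromBlocks A B C D * La q)
      - (La q * Matrix.fromBlocks A B C D - Matrix.fromBlocks A B C D * La q) * La p
      = Matrix.fromBlocks 0 0 (-(B p q) • e p q - (B q p) • e q p) 0 := by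
  simp [La, Matrix.fromBlocks_multiply, fromBlocks_sub, Matrix.mul_sub,
    Matrix.sub_mul, Matrix.mul_assoc, e_mul_e_mat, e_mul_e, e_mat_e', e_mat_e,
    hpq, Ne.symm hpq]

lemma br_UU (p q : Fin n) (hpq : p ≠ q) (A B C D : Matrix (Fin n) (Fin n) ℂ) :
    Ua p * (Ua q * Matrix.fromBlocks A B C D - Matrix.fromBlocks A B C D * Ua q)
      - (Ua q * Matrix.fromBlocks A B C D - Matrix.fromBlocks A B C D * Ua q) * Ua p
      = Matrix.fromBlocks 0 (-(C p q) • e p q - (C q p) • e q p) 0 0 := by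
  simp [Ua, Matrix.fromBlocks_multiply, fromBlocks_sub, Matrix.mul_sub,
    Matrix.sub_mul, Matrix.mul_assoc, e_mul_e_mat, e_mul_e, e_mat_e', e_mat_e,
    hpq, Ne.symm hpq]

lemma br_Sdiag (p q : Fin n) (A D : Matrix (Fin n) (Fin n) ℂ)
    (hA : ∀ i j, i ≠ j → A i j = 0) (hD : ∀ i j, i ≠ j → D i j = 0) :
    Sg p q * Matrix.fromBlocks A 0 0 D - Matrix.fromBlocks A 0 0 D * Sg p q
      = Matrix.fromBlocks (A q q • e p q - A p p • e p q) 0 0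
          (D q q • e q p - D p p • e q p) := by
  simp [Sg, Matrix.fromBlocks_multiply, fromBlocks_sub, mul_diag A hA,
    diag_mul A hA, mul_diag D hD, diag_mul D hD, neg_add_eq_sub, sub_eq_add_neg,
    Matrix.fromBlocks_add, Matrix.fromBlocks_neg, Matrix.fromBlocks_inj, add_comm]

lemma br2a (p q : Fin n) (hpq : p ≠ q) :
    Ua q * cg p q - cg p q * Ua q
      = Matrix.fromBlocks (-(e q p)) 0 0 (-(e p q)) := by
  simp [Ua, cg, Matrix.fromBlocks_multiply, fromBlocks_sub, Matrix.mul_sub,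
    Matrix.sub_mul, Matrix.mul_assoc, e_mul_e_mat, e_mul_e, e_mat_e', e_mat_e,
    hpq, Ne.symm hpq]

lemma br2b (p q : Fin n) (hpq : p ≠ q) :
    La q * bg p q - bg p q * La q
      = Matrix.fromBlocks (-(e p q)) 0 0 (-(e q p)) := by
  simp [La, bg, Matrix.fromBlocks_multiply, fromBlocks_sub, Matrix.mul_sub,
    Matrix.sub_mul, Matrix.mul_assoc, e_mul_e_mat, e_mul_e, e_mat_e', e_mat_e,
    hpq, Ne.symm hpq]

lemma br2c (p q : Fin n) (hpq : p ≠ q) :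
    Ua q * ag p q - ag p q * Ua q
      = Matrix.fromBlocks 0 (e q p - e p q) 0 0 := by
  simp [Ua, ag, Matrix.fromBlocks_multiply, fromBlocks_sub, Matrix.mul_sub,
    Matrix.sub_mul, Matrix.mul_assoc, e_mul_e_mat, e_mul_e, e_mat_e', e_mat_e,
    hpq, Ne.symm hpq, sub_eq_add_neg, Matrix.fromBlocks_add, Matrix.fromBlocks_neg]

lemma br2d (p q : Fin n) (hpq : p ≠ q) :
    La p * ag p q - ag p q * La p
      = Matrix.fromBlocks 0 0 (e p q - e q p) 0 := by
  simp [La, ag, Matrix.fromBlocks_multiply, fromBlocks_sub, Matrix.mul_sub,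
    Matrix.sub_mul, Matrix.mul_assoc, e_mul_e_mat, e_mul_e, e_mat_e', e_mat_e,
    hpq, Ne.symm hpq, sub_eq_add_neg, Matrix.fromBlocks_add, Matrix.fromBlocks_neg]

lemma br2e (p q : Fin n) (hpq : p ≠ q) :
    Sg q p * ag p q - ag p q * Sg q p
      = Matrix.fromBlocks (e q q - e p p) 0 0 (e q q - e p p) := by
  simp [Sg, ag, Matrix.fromBlocks_multiply, fromBlocks_sub, Matrix.mul_sub,
    Matrix.sub_mul, Matrix.mul_assoc, e_mul_e_mat, e_mul_e, e_mat_e', e_mat_e,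
    hpq, Ne.symm hpq, neg_add_eq_sub]

lemma br2f (p q : Fin n) (hpq : p ≠ q) :
    Sg q p * dg p q - dg p q * Sg q p
      = Matrix.fromBlocks (e q p + e q p) 0 0 (e p q + e p q) := by
  simp only [Sg, dg, Matrix.fromBlocks_multiply, fromBlocks_sub, Matrix.mul_zero,
    Matrix.zero_mul, add_zero, zero_add, Matrix.mul_sub, Matrix.sub_mul,
    Matrix.neg_mul, Matrix.mul_neg, e_mul_e, sub_zero, zero_sub, neg_neg, neg_sub]
  simp only [if_pos rfl, if_neg hpq, if_neg (Ne.symm hpq)]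
  rw [Matrix.fromBlocks_inj]
  refine ⟨by abel, by simp, by simp, by abel⟩

lemma br2g (p q r : Fin n) (hrq : r ≠ q) :
    Sg r p * ag p q - ag p q * Sg r p
      = Matrix.fromBlocks (e r q) 0 0 (e q r) := by
  simp [Sg, ag, Matrix.fromBlocks_multiply, fromBlocks_sub, Matrix.mul_sub,
    Matrix.sub_mul, Matrix.mul_assoc, e_mul_e_mat, e_mul_e, e_mat_e', e_mat_e,
    hrq, Ne.symm hrq]

lemma br2h (p q s : Fin n) (hsp : s ≠ p) :
    Sg q s * ag p q - ag p q * Sg q s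
      = Matrix.fromBlocks (-(e p s)) 0 0 (-(e s p)) := by
  simp [Sg, ag, Matrix.fromBlocks_multiply, fromBlocks_sub, Matrix.mul_sub,
    Matrix.sub_mul, Matrix.mul_assoc, e_mul_e_mat, e_mul_e, e_mat_e', e_mat_e,
    hsp, Ne.symm hsp]

section Gen

variable {W : Submodule ℂ (Matrix (Fin n ⊕ Fin n) (Fin n ⊕ Fin n) ℂ)}
  (hst : ∀ X : Matrix (Fin n ⊕ Fin n) (Fin n ⊕ Fin n) ℂ,
    Xᵀ * stdJ n + stdJ n * X = 0 → ∀ Y ∈ W, X * Y - Y * X ∈ W)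

include hst

lemma gen_ag {p q : Fin n} (hpq : p ≠ q) (h : ag p q ∈ W) :
    ∀ r s : Fin n, r ≠ s → ag r s ∈ W := by
  have hS : ∀ r s : Fin n, ∀ Y ∈ W, Sg r s * Y - Y * Sg r s ∈ W :=
    fun r s Y hY => hst _ (Sg_mem_sp r s) Y hY
  have row : ∀ p q r : Fin n, r ≠ q → ag p q ∈ W → ag r q ∈ W := by
    intro p q r hrq hin
    have h1 := hS r p _ hin
    rw [br2g p q r hrq] at h1
    exact h1
  have col : ∀ p q s : Fin n, s ≠ p → ag p q ∈ W → ag p s ∈ W := by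
    intro p q s hsp hin
    have h1 := hS q s _ hin
    rw [br2h p q s hsp] at h1
    have h2 : ag (n := n) p s = -Matrix.fromBlocks (-(e p s)) 0 0 (-(e s p)) := by
      simp [ag, Matrix.fromBlocks_neg]
    rw [h2]; exact W.neg_mem h1
  have flip : ∀ p q : Fin n, p ≠ q → ag p q ∈ W → ag q p ∈ W := by
    intro p q hpq hin
    have h1 := hS q p _ hin
    rw [br2e p q hpq] at h1
    have h1' : dg (n := n) p q ∈ W := by
      have hh : dg (n := n) p q
          = -Matrix.fromBlocks (e q q - e p p) 0 0 (e q q - e p p) := by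
        simp [dg, Matrix.fromBlocks_neg]
      rw [hh]; exact W.neg_mem h1
    have h2 := hS q p _ h1'
    rw [br2f p q hpq] at h2
    have key : ∀ M : Matrix (Fin n) (Fin n) ℂ, (2⁻¹ : ℂ) • (M + M) = M := by
      intro M; rw [← two_smul ℂ M, smul_smul]; norm_num
    have h3 : ag (n := n) q p
        = (2⁻¹ : ℂ) • Matrix.fromBlocks (e q p + e q p) 0 0 (e p q + e p q) := by
      rw [Matrix.fromBlocks_smul, key, key, ag, smul_zero]
    rw [h3]; exact W.smul_mem _ h2
  intro r s hrs
  by_cases hsq : s = q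
  · rw [hsq] at hrs ⊢; exact row p q r hrs h
  · by_cases hrq : r = q
    · rw [hrq] at hrs ⊢
      exact col q p s (Ne.symm hrs) (flip p q hpq h)
    · exact col r q s (Ne.symm hrs) (row p q r hrq h)

lemma gen_bg (hall : ∀ r s : Fin n, r ≠ s → ag r s ∈ W) (p q : Fin n) :
    bg p q ∈ W := by
  by_cases hpq : p = q
  · subst hpq
    have : bg (n := n) p p = 0 := by simp [bg]
    rw [this]; exact W.zero_mem
  · have h1 := hst _ (Ua_mem_sp p) _ (hall q p (Ne.symm hpq))
    rw [br2c q p (Ne.symm hpq)] at h1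
    exact h1

lemma gen_cg (hall : ∀ r s : Fin n, r ≠ s → ag r s ∈ W) (p q : Fin n) :
    cg p q ∈ W := by
  by_cases hpq : p = q
  · subst hpq
    have : cg (n := n) p p = 0 := by simp [cg]
    rw [this]; exact W.zero_mem
  · have h1 := hst _ (La_mem_sp p) _ (hall p q hpq)
    rw [br2d p q hpq] at h1
    exact h1

lemma gen_dg (hall : ∀ r s : Fin n, r ≠ s → ag r s ∈ W) (p q : Fin n) :
    dg p q ∈ W := by
  by_cases hpq : p = q
  · subst hpq
    have : dg (n := n) p p = 0 := by simp [dg]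
    rw [this]; exact W.zero_mem
  · have h1 := hst _ (Sg_mem_sp p q) _ (hall q p (Ne.symm hpq))
    rw [br2e q p (Ne.symm hpq)] at h1
    exact h1


lemma smul_mem_cancel {x : Matrix (Fin n ⊕ Fin n) (Fin n ⊕ Fin n) ℂ} {c : ℂ}
    (hc : c ≠ 0) (h : c • x ∈ W) : x ∈ W := by
  have h2 := W.smul_mem c⁻¹ h
  rwa [smul_smul, inv_mul_cancel₀ hc, one_smul] at h2

omit hst in
lemma trace_eq_sum (A : Matrix (Fin n) (Fin n) ℂ) : A.trace = ∑ p, A p p := rfl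

lemma exists_ag (hn : 1 ≤ n)
    (A B C : Matrix (Fin n) (Fin n) ℂ) (hB : Bᵀ = -B) (hC : Cᵀ = -C)
    (htr : A.trace = 0) (hmem : Matrix.fromBlocks A B C Aᵀ ∈ W)
    (hne : Matrix.fromBlocks A B C Aᵀ ≠ 0) :
    ∃ p q : Fin n, p ≠ q ∧ ag p q ∈ W := by
  have hBent : ∀ p q, B p q = -(B q p) := by
    intro p q
    have := congrFun (congrFun hB q) p
    simpa using this
  have hCent : ∀ p q, C p q = -(C q p) := by
    intro p q
    have := congrFun (congrFun hC q) p
    simpa using this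
  by_cases hBne : ∃ p q, B p q ≠ 0
  · obtain ⟨p, q, hB0⟩ := hBne
    have hpq : p ≠ q := by
      rintro rfl
      have h := hBent p p
      exact hB0 (by linear_combination h / 2)
    have h1 := hst _ (La_mem_sp q) _ hmem
    have h2 := hst _ (La_mem_sp p) _ h1
    rw [br_LL p q hpq A B C Aᵀ, hBent q p] at h2
    have hform : Matrix.fromBlocks 0 0 (-(B p q) • e p q - -(B p q) • e q p) 0
        = (-(B p q)) • cg p q := by
      simp [cg, Matrix.fromBlocks_smul, Matrix.fromBlocks_neg, smul_sub, neg_smul,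
        sub_eq_add_neg, neg_neg, add_comm]
    rw [hform] at h2
    have hcg : cg p q ∈ W := smul_mem_cancel hst (neg_ne_zero.mpr hB0) h2
    have h3 := hst _ (Ua_mem_sp q) _ hcg
    rw [br2a p q hpq] at h3
    have hag : ag (n := n) q p = -Matrix.fromBlocks (-(e q p)) 0 0 (-(e p q)) := by
      simp [ag, Matrix.fromBlocks_neg]
    exact ⟨q, p, Ne.symm hpq, by rw [hag]; exact W.neg_mem h3⟩
  · by_cases hCne : ∃ p q, C p q ≠ 0
    · obtain ⟨p, q, hC0⟩ := hCne
      have hpq : p ≠ q := by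
        rintro rfl
        have h := hCent p p
        exact hC0 (by linear_combination h / 2)
      have h1 := hst _ (Ua_mem_sp q) _ hmem
      have h2 := hst _ (Ua_mem_sp p) _ h1
      rw [br_UU p q hpq A B C Aᵀ, hCent q p] at h2
      have hform : Matrix.fromBlocks 0 (-(C p q) • e p q - -(C p q) • e q p) 0 0
          = (-(C p q)) • bg p q := by
        simp [bg, Matrix.fromBlocks_smul, Matrix.fromBlocks_neg, smul_sub, neg_smul,
          sub_eq_add_neg, neg_neg, add_comm]
      rw [hform] at h2
      have hbg : bg p q ∈ W := smul_mem_cancel hst (neg_ne_zero.mpr hC0) h2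
      have h3 := hst _ (La_mem_sp q) _ hbg
      rw [br2b p q hpq] at h3
      have hag : ag (n := n) p q = -Matrix.fromBlocks (-(e p q)) 0 0 (-(e q p)) := by
        simp [ag, Matrix.fromBlocks_neg]
      exact ⟨p, q, hpq, by rw [hag]; exact W.neg_mem h3⟩
    · by_cases hAne : ∃ p q, p ≠ q ∧ A p q ≠ 0
      · obtain ⟨p, q, hpq, hA0⟩ := hAne
        have h1 := hst _ (La_mem_sp p) _ hmem
        have h2 := hst _ (Ua_mem_sp q) _ h1
        rw [br_UL q p (Ne.symm hpq) A B C Aᵀ] at h2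
        simp only [Matrix.transpose_apply] at h2
        have hform : Matrix.fromBlocks (-(A p q) • e q p) 0 0 (-(A p q) • e p q)
            = (-(A p q)) • ag q p := by
          simp [ag, Matrix.fromBlocks_smul, Matrix.fromBlocks_neg, neg_smul]
        rw [hform] at h2
        exact ⟨q, p, Ne.symm hpq, smul_mem_cancel hst (neg_ne_zero.mpr hA0) h2⟩
      · push_neg at hBne hCne hAne
        have hBz : B = 0 := by ext i j; simp [hBne i j]
        have hCz : C = 0 := by ext i j; simp [hCne i j]
        rw [hBz, hCz] at hmem
        have hAdiag : ∀ i j : Fin n, i ≠ j → A i j = 0 := hAne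
        have hATdiag : ∀ i j : Fin n, i ≠ j → Aᵀ i j = 0 := fun i j h =>
          hAne j i (Ne.symm h)
        have hp : ∃ p, A p p ≠ 0 := by
          by_contra hcon
          push_neg at hcon
          apply hne
          have hA : A = 0 := by
            ext i j
            by_cases hij : i = j
            · subst hij; simp [hcon i]
            · simp [hAdiag i j hij]
          rw [hA, hBz, hCz]
          simp [Matrix.fromBlocks_zero]
        obtain ⟨p, hp0⟩ := hp
        have hq : ∃ q, A q q ≠ A p p := by
          by_contra hcon
          push_neg at hcon
          rw [trace_eq_sum] at htr
          rw [Finset.sum_congr rfl (fun q _ => hcon q)] at htr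
          simp only [Finset.sum_const, Finset.card_univ, Fintype.card_fin,
            nsmul_eq_mul] at htr
          apply hp0
          have hn0 : (n : ℂ) ≠ 0 := by
            exact_mod_cast Nat.cast_ne_zero.mpr (by omega)
          exact (mul_eq_zero.mp htr).resolve_left hn0
        obtain ⟨q, hq0⟩ := hq
        have hpq : p ≠ q := fun h => hq0 (by rw [h])
        have h1 := hst _ (Sg_mem_sp p q) _ hmem
        rw [br_Sdiag p q A Aᵀ hAdiag hATdiag] at h1
        simp only [Matrix.transpose_apply] at h1
        have hform : Matrix.fromBlocks (A q q • e p q - A p p • e p q) 0 0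
            (A q q • e q p - A p p • e q p) = (A q q - A p p) • ag p q := by
          simp [ag, Matrix.fromBlocks_smul, sub_smul, fromBlocks_sub]
        rw [hform] at h1
        exact ⟨p, q, hpq, smul_mem_cancel hst (sub_ne_zero.mpr hq0) h1⟩

omit hst in
lemma sum_fromBlocks {ι : Type*} (s : Finset ι)
    (f g h k : ι → Matrix (Fin n) (Fin n) ℂ) :
    ∑ i ∈ s, Matrix.fromBlocks (f i) (g i) (h i) (k i)
      = Matrix.fromBlocks (∑ i ∈ s, f i) (∑ i ∈ s, g i)
          (∑ i ∈ s, h i) (∑ i ∈ s, k i) := by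
  ext (a | a) (b | b) <;> simp [Matrix.fromBlocks, Matrix.sum_apply]

omit hst in
lemma sum_sum_smul_e (g : Fin n → Fin n → ℂ) :
    ∑ p, ∑ q, g p q • e p q = Matrix.of g := by
  ext i j
  simp [e, Matrix.sum_apply, Matrix.single, ite_and, mul_ite,
    Finset.sum_ite_eq, Finset.sum_ite_eq']

omit hst in
lemma sum_sum_smul_e' (g : Fin n → Fin n → ℂ) :
    ∑ p, ∑ q, g p q • e q p = Matrix.of (fun i j => g j i) := by
  ext i j
  simp [e, Matrix.sum_apply, Matrix.single, ite_and, mul_ite,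
    Finset.sum_ite_eq, Finset.sum_ite_eq']

omit hst in
lemma sum_diag_smul_e (c : Fin n → ℂ) :
    ∑ p, c p • e p p = Matrix.of (fun i j => if i = j then c i else 0) := by
  ext i j
  simp [e, Matrix.sum_apply, Matrix.single, ite_and, mul_ite,
    Finset.sum_ite_eq, Finset.sum_ite_eq']

omit hst in
lemma span_mem (hn : 1 ≤ n)
    (ha : ∀ p q : Fin n, p ≠ q → ag p q ∈ W)
    (hb : ∀ p q : Fin n, bg p q ∈ W) (hc : ∀ p q : Fin n, cg p q ∈ W)
    (hd : ∀ p q : Fin n, dg p q ∈ W)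
    (A B C : Matrix (Fin n) (Fin n) ℂ) (hB : Bᵀ = -B) (hC : Cᵀ = -C)
    (htr : A.trace = 0) : Matrix.fromBlocks A B C Aᵀ ∈ W := by
  have hBent : ∀ p q, B p q = -(B q p) := by
    intro p q; simpa using congrFun (congrFun hB q) p
  have hCent : ∀ p q, C p q = -(C q p) := by
    intro p q; simpa using congrFun (congrFun hC q) p
  have htr' : ∑ p, A p p = 0 := by
    rw [trace_eq_sum] at htr; exact htr
  set p₀ : Fin n := ⟨0, hn⟩ with hp₀
  have key : Matrix.fromBlocks A B C Aᵀ
      = (∑ p, ∑ q, (if p = q then 0 else A p q) • ag p q)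
        + ((∑ p, A p p • dg p p₀)
        + ((∑ p, ∑ q, ((2⁻¹ : ℂ) * B p q) • bg p q)
        + (∑ p, ∑ q, ((2⁻¹ : ℂ) * C p q) • cg p q))) := by
    simp only [ag, bg, cg, dg, Matrix.fromBlocks_smul, smul_zero, smul_sub,
      sum_fromBlocks, Matrix.fromBlocks_add, Finset.sum_const_zero, add_zero,
      zero_add]
    rw [Matrix.fromBlocks_inj]
    have hS2 : ∑ p, (A p p • e p p - A p p • e p₀ p₀)
        = Matrix.of (fun i j : Fin n => if i = j then A i i else 0) := by
      rw [Finset.sum_sub_distrib, ← Finset.sum_smul, htr', zero_smul, sub_zero,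
        sum_diag_smul_e]
    refine ⟨?_, ?_, ?_, ?_⟩
    · rw [hS2, sum_sum_smul_e]
      ext i j
      by_cases hij : i = j <;> simp [hij]
    · rw [Finset.sum_congr rfl (fun p _ => Finset.sum_sub_distrib _ _),
        Finset.sum_sub_distrib, sum_sum_smul_e, sum_sum_smul_e']
      ext i j
      have h := hBent i j
      simp only [Matrix.sub_apply, Matrix.of_apply]
      rw [h]; ring
    · rw [Finset.sum_congr rfl (fun p _ => Finset.sum_sub_distrib _ _),
        Finset.sum_sub_distrib, sum_sum_smul_e, sum_sum_smul_e']
      ext i j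
      have h := hCent i j
      simp only [Matrix.sub_apply, Matrix.of_apply]
      rw [h]; ring
    · rw [hS2, sum_sum_smul_e']
      ext i j
      by_cases hij : i = j <;> simp [Matrix.transpose_apply, hij]
      exact fun h => absurd h.symm hij
  rw [key]
  refine W.add_mem (Submodule.sum_mem _ fun p _ => Submodule.sum_mem _ fun q _ => ?_)
    (W.add_mem (Submodule.sum_mem _ fun p _ => W.smul_mem _ (hd p p₀))
      (W.add_mem
        (Submodule.sum_mem _ fun p _ => Submodule.sum_mem _ fun q _ =>
          W.smul_mem _ (hb p q))
        (Submodule.sum_mem _ fun p _ => Submodule.sum_mem _ fun q _ =>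
          W.smul_mem _ (hc p q))))
  by_cases hpq : p = q
  · rw [if_pos hpq, zero_smul]; exact W.zero_mem
  · rw [if_neg hpq]; exact W.smul_mem _ (ha p q hpq)

end Gen

lemma decompose (X : Matrix (Fin n ⊕ Fin n) (Fin n ⊕ Fin n) ℂ) :
    ∃ (S : Matrix (Fin n ⊕ Fin n) (Fin n ⊕ Fin n) ℂ)
      (A B C : Matrix (Fin n) (Fin n) ℂ),
      (Sᵀ * stdJ n + stdJ n * S = 0) ∧ Bᵀ = -B ∧ Cᵀ = -C ∧
      A.trace = (2⁻¹ : ℂ) * X.trace ∧ X = S + Matrix.fromBlocks A B C Aᵀ := by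
  obtain ⟨A₀, B₀, C₀, D₀, hX⟩ : ∃ A B C D, X = Matrix.fromBlocks A B C D :=
    ⟨X.toBlocks₁₁, X.toBlocks₁₂, X.toBlocks₂₁, X.toBlocks₂₂,
      (Matrix.fromBlocks_toBlocks X).symm⟩
  refine ⟨Matrix.fromBlocks ((2⁻¹ : ℂ) • (A₀ - D₀ᵀ)) ((2⁻¹ : ℂ) • (B₀ + B₀ᵀ))
      ((2⁻¹ : ℂ) • (C₀ + C₀ᵀ)) (-(((2⁻¹ : ℂ) • (A₀ - D₀ᵀ))ᵀ)),
    (2⁻¹ : ℂ) • (A₀ + D₀ᵀ), (2⁻¹ : ℂ) • (B₀ - B₀ᵀ), (2⁻¹ : ℂ) • (C₀ - C₀ᵀ),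
    ?_, ?_, ?_, ?_, ?_⟩
  · rw [mem_sp_iff]
    refine ⟨?_, rfl, ?_⟩ <;>
      simp [Matrix.transpose_smul, Matrix.transpose_add, Matrix.transpose_transpose,
        add_comm]
  · rw [Matrix.transpose_smul, Matrix.transpose_sub, Matrix.transpose_transpose,
      ← smul_neg, neg_sub]
  · rw [Matrix.transpose_smul, Matrix.transpose_sub, Matrix.transpose_transpose,
      ← smul_neg, neg_sub]
  · rw [hX, trace_fromBlocks, Matrix.trace_smul, Matrix.trace_add,
      Matrix.trace_transpose, smul_eq_mul]
  · rw [hX, Matrix.fromBlocks_add, Matrix.fromBlocks_inj]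
    refine ⟨by module, by module, by module, ?_⟩
    simp only [Matrix.transpose_smul, Matrix.transpose_sub, Matrix.transpose_add,
      Matrix.transpose_transpose]
    module

end SlSp


/-- For `n ≥ 1`, every complex linear subspace `W` of `sl(2n, ℂ)`
containing `sp(2n, ℂ)` and stable under the adjoint action of `sp(2n, ℂ)`
(`[X, Y] = XY − YX ∈ W` for all `X ∈ sp(2n, ℂ)`, `Y ∈ W`) equals `sp(2n, ℂ)` or
`sl(2n, ℂ)`.  (For `n ≥ 2` this says that `sl(2n, ℂ)/sp(2n, ℂ)` with the adjoint
action is an irreducible `sp(2n, ℂ)`-module.) -/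
theorem sl_div_sp_irreducible
    (n : ℕ) (hn : 1 ≤ n)
    (W : Submodule ℂ (Matrix (Fin n ⊕ Fin n) (Fin n ⊕ Fin n) ℂ))
    (hWsl : (W : Set _) ⊆ {X : Matrix (Fin n ⊕ Fin n) (Fin n ⊕ Fin n) ℂ |
        X.trace = 0})
    (hspW : {X : Matrix (Fin n ⊕ Fin n) (Fin n ⊕ Fin n) ℂ |
        Xᵀ * stdJ n + stdJ n * X = 0} ⊆ (W : Set _))
    (hstable : ∀ X : Matrix (Fin n ⊕ Fin n) (Fin n ⊕ Fin n) ℂ,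
        Xᵀ * stdJ n + stdJ n * X = 0 → ∀ Y ∈ W, X * Y - Y * X ∈ W) :
    (W : Set _) = {X : Matrix (Fin n ⊕ Fin n) (Fin n ⊕ Fin n) ℂ |
        Xᵀ * stdJ n + stdJ n * X = 0} ∨
    (W : Set _) = {X : Matrix (Fin n ⊕ Fin n) (Fin n ⊕ Fin n) ℂ | X.trace = 0} := by
  by_cases hWsp : (W : Set _) ⊆ {X : Matrix (Fin n ⊕ Fin n) (Fin n ⊕ Fin n) ℂ |
      Xᵀ * stdJ n + stdJ n * X = 0}
  · left; exact Set.Subset.antisymm hWsp hspW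
  · right
    refine Set.Subset.antisymm hWsl ?_
    rw [Set.not_subset] at hWsp
    obtain ⟨Y, hYW, hYsp⟩ := hWsp
    obtain ⟨S, A, B, C, hSsp, hBa, hCa, htrA, hYdec⟩ := SlSp.decompose Y
    have hYtr : Y.trace = 0 := hWsl hYW
    have htrA0 : A.trace = 0 := by rw [htrA, hYtr, mul_zero]
    have hZW : Matrix.fromBlocks A B C Aᵀ ∈ W := by
      have h2 := W.sub_mem hYW (hspW hSsp)
      rwa [hYdec, add_sub_cancel_left] at h2
    have hZne : Matrix.fromBlocks A B C Aᵀ ≠ 0 := by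
      intro h0
      apply hYsp
      show Yᵀ * stdJ n + stdJ n * Y = 0
      rw [hYdec, h0, add_zero]
      exact hSsp
    obtain ⟨p, q, hpq, hag⟩ :=
      SlSp.exists_ag hstable hn A B C hBa hCa htrA0 hZW hZne
    have hall := SlSp.gen_ag hstable hpq hag
    have hb := SlSp.gen_bg hstable hall
    have hc := SlSp.gen_cg hstable hall
    have hd := SlSp.gen_dg hstable hall
    intro X hX
    obtain ⟨S', A', B', C', hSsp', hBa', hCa', htrA', hXdec⟩ := SlSp.decompose X
    have htrA0' : A'.trace = 0 := by
      rw [htrA', show X.trace = 0 from hX, mul_zero]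
    have h1 : Matrix.fromBlocks A' B' C' A'ᵀ ∈ W :=
      SlSp.span_mem hn (fun p q h => hall p q h) hb hc hd A' B' C' hBa' hCa' htrA0'
    show X ∈ W
    rw [hXdec]
    exact W.add_mem (hspW hSsp') h1
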